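/- Given an extended conditional intuitionistic model M = (W, ≤, R, V), define R^{n4} ⊆ W × (P(W)×P(W)) × W by: (w,(X,Y),v) ∈ R^{n4} iff there exists u with (w,X,u) ∈ R and (u,Y,v) ∈ R. Then (W, ≤, R^{n4}) satisfies the Nelsonian conditional frame conditions: (c1) ≤⁻¹ ∘ R^{n4}_{(X,Y)} ⊆ R^{n4}_{(X,Y)} ∘ ≤⁻¹ and (c2) R^{n4}_{(X,Y)} ∘ ≤ ⊆ ≤ ∘ R^{n4}_{(X,Y)}, for all X, Y ⊆ W. -/
import Mathlib

/-- An extended conditional intuitionistic model (only the frame part matters here). -/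
structure CIModel where
  W : Type
  le : W → W → Prop
  refl : ∀ w, le w w
  trans : ∀ {a b c}, le a b → le b c → le a c
  R : W → Set W → W → Prop
  c1 : ∀ (X : Set W) {w w' v}, le w w' → R w X v → ∃ v', R w' X v' ∧ le v v'
  c2 : ∀ (X : Set W) {w v v'}, R w X v → le v v' → ∃ w', le w w' ∧ R w' X v'

/-- The composed bi-set-indexed relation `R^{n4}`. -/
def Rn4 (M : CIModel) (w : M.W) (XY : Set M.W × Set M.W) (v : M.W) : Prop :=
  ∃ u, M.R w XY.1 u ∧ M.R u XY.2 v

/-- `R^{n4}` satisfies the Nelsonian conditional frame conditions (c1) and (c2). -/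
theorem Rn4_frame_conditions (M : CIModel) (XY : Set M.W × Set M.W) :
    (∀ {w w' v : M.W}, M.le w w' → Rn4 M w XY v → ∃ v', Rn4 M w' XY v' ∧ M.le v v') ∧
    (∀ {w v v' : M.W}, Rn4 M w XY v → M.le v v' → ∃ w'', M.le w w'' ∧ Rn4 M w'' XY v') := by
  constructor
  · intro w w' v hle ⟨u, h1, h2⟩
    obtain ⟨u', hu', hleu⟩ := M.c1 XY.1 hle h1
    obtain ⟨v', hv', hlev⟩ := M.c1 XY.2 hleu h2
    exact ⟨v', ⟨u', hu', hv'⟩, hlev⟩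
  · intro w v v' ⟨u, h1, h2⟩ hle
    obtain ⟨u', hleu, hu'⟩ := M.c2 XY.2 h2 hle
    obtain ⟨w'', hlew, hw''⟩ := M.c2 XY.1 h1 hleu
    exact ⟨w'', hlew, ⟨u', hw'', hu'⟩⟩
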